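/- arXiv:2103.01292 — 2 statements merged into one kernel-verified Lean document; each statement's English description precedes it below -/
import Mathlib

section
/- Maxfun pooling is nonexpansive in the Frobenius norm: for any two images X, X̂ ∈ ℝ^{N×N} and parameters b, s with the pooling regions of stride s ≥ 2b+1, letting P = M_{b,s}(X) and P̂ = M_{b,s}(X̂), one has ‖P − P̂‖_F ≤ ‖X − X̂‖_F. -/
open Finset

noncomputable section

/-- Center coordinate of the `k`-th pooling interval for odd stride `s`. -/
def ctr (s : ℕ) (k : ℤ) : ℤ := k * s + ((s : ℤ) - 1) / 2

/-- The `s × s` pooling region `Q_{k,ℓ}`. -/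
def Qreg (s : ℕ) (k l : ℤ) : Finset (ℤ × ℤ) :=
  (Finset.Ico (k * s) (k * s + s)) ×ˢ (Finset.Ico (l * s) (l * s + s))

/-- The centered sub-square `B_{k,ℓ,r}` of side `2r+1`. -/
def Bsq (s : ℕ) (r : ℕ) (k l : ℤ) : Finset (ℤ × ℤ) :=
  (Finset.Icc (ctr s k - r) (ctr s k + r)) ×ˢ (Finset.Icc (ctr s l - r) (ctr s l + r))

/-- Average of `X` over the centered sub-square of side `2r+1`. -/
def subAvg (s r : ℕ) (X : ℤ × ℤ → ℝ) (k l : ℤ) : ℝ :=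
  (∑ p ∈ Bsq s r k l, X p) / ((2 * (r : ℝ) + 1)) ^ 2

/-- Maxfun pooling: maximum over `1 ≤ r ≤ b` of the centered sub-square averages. -/
def maxfun (b s : ℕ) (X : ℤ × ℤ → ℝ) (k l : ℤ) : ℝ :=
  if h : (Finset.Icc 1 b).Nonempty then
    (Finset.Icc 1 b).sup' h (fun r => subAvg s r X k l)
  else 0

/-- Average pooling over the region `Q_{k,ℓ}`. -/
def avgPool (s : ℕ) (X : ℤ × ℤ → ℝ) (k l : ℤ) : ℝ :=
  (∑ p ∈ Qreg s k l, X p) / (s : ℝ) ^ 2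

/-- Max pooling over the region `Q_{k,ℓ}`. -/
def maxPool (s : ℕ) (X : ℤ × ℤ → ℝ) (k l : ℤ) : ℝ :=
  if h : (Qreg s k l).Nonempty then (Qreg s k l).sup' h X else 0

lemma Bsq_subset_Qreg (s r b : ℕ) (hs : Odd s) (hr : r ∈ Finset.Icc 1 b) (hbs : 2*b+1 ≤ s) (k l : ℤ) :
    Bsq s r k l ⊆ Qreg s k l := by
  obtain ⟨m, hm⟩ := hs
  simp only [Finset.mem_Icc] at hr
  have hdiv : ((s:ℤ) - 1)/2 = m := by omega
  rintro ⟨i, j⟩ hp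
  simp only [Bsq, Qreg, Finset.mem_product, Finset.mem_Icc, Finset.mem_Ico, ctr, hdiv] at hp ⊢
  omega

lemma card_Bsq (s r : ℕ) (k l : ℤ) : (Bsq s r k l).card = (2*r+1) * (2*r+1) := by
  simp only [Bsq, Finset.card_product, Int.card_Icc]
  have : ∀ a : ℤ, (a + r + 1 - (a - r)).toNat = 2*r+1 := by intro a; omega
  rw [this, this]

lemma subAvg_diff_le (s r b : ℕ) (hs : Odd s) (hr : r ∈ Finset.Icc 1 b) (hbs : 2*b+1 ≤ s)
    (X Xhat : ℤ × ℤ → ℝ) (k l : ℤ) :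
    |subAvg s r X k l - subAvg s r Xhat k l| ≤
      Real.sqrt (∑ p ∈ Qreg s k l, (X p - Xhat p)^2) := by
  have hQ : (0:ℝ) ≤ ∑ p ∈ Qreg s k l, (X p - Xhat p)^2 :=
    Finset.sum_nonneg fun p _ => sq_nonneg _
  have hB : (0:ℝ) ≤ ∑ p ∈ Bsq s r k l, (X p - Xhat p)^2 :=
    Finset.sum_nonneg fun p _ => sq_nonneg _
  have hBQ : ∑ p ∈ Bsq s r k l, (X p - Xhat p)^2 ≤ ∑ p ∈ Qreg s k l, (X p - Xhat p)^2 :=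
    Finset.sum_le_sum_of_subset_of_nonneg (Bsq_subset_Qreg s r b hs hr hbs k l)
      (fun p _ _ => sq_nonneg _)
  have hcs : (∑ p ∈ Bsq s r k l, (X p - Xhat p))^2
      ≤ (2*(r:ℝ)+1)^2 * ∑ p ∈ Bsq s r k l, (X p - Xhat p)^2 := by
    have := sq_sum_le_card_mul_sum_sq (s := Bsq s r k l) (f := fun p => X p - Xhat p)
    calc (∑ p ∈ Bsq s r k l, (X p - Xhat p))^2
        ≤ ((Bsq s r k l).card : ℝ) * ∑ p ∈ Bsq s r k l, (X p - Xhat p)^2 := this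
      _ = (2*(r:ℝ)+1)^2 * ∑ p ∈ Bsq s r k l, (X p - Xhat p)^2 := by
          rw [card_Bsq]; congr 1; push_cast; ring
  have hpos : (0:ℝ) < (2*(r:ℝ)+1)^2 := by positivity
  have habs : |∑ p ∈ Bsq s r k l, (X p - Xhat p)| ≤
      (2*(r:ℝ)+1) * Real.sqrt (∑ p ∈ Bsq s r k l, (X p - Xhat p)^2) := by
    rw [← Real.sqrt_sq_eq_abs]
    calc Real.sqrt ((∑ p ∈ Bsq s r k l, (X p - Xhat p))^2)
        ≤ Real.sqrt ((2*(r:ℝ)+1)^2 * ∑ p ∈ Bsq s r k l, (X p - Xhat p)^2) :=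
          Real.sqrt_le_sqrt hcs
      _ = (2*(r:ℝ)+1) * Real.sqrt (∑ p ∈ Bsq s r k l, (X p - Xhat p)^2) := by
          rw [Real.sqrt_mul (by positivity), Real.sqrt_sq (by positivity)]
  have hdiff : subAvg s r X k l - subAvg s r Xhat k l
      = (∑ p ∈ Bsq s r k l, (X p - Xhat p)) / (2*(r:ℝ)+1)^2 := by
    simp only [subAvg, Finset.sum_sub_distrib, sub_div]
  rw [hdiff, abs_div, abs_of_pos hpos, div_le_iff₀ hpos]
  calc |∑ p ∈ Bsq s r k l, (X p - Xhat p)|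
      ≤ (2*(r:ℝ)+1) * Real.sqrt (∑ p ∈ Bsq s r k l, (X p - Xhat p)^2) := habs
    _ ≤ (2*(r:ℝ)+1)^2 * Real.sqrt (∑ p ∈ Qreg s k l, (X p - Xhat p)^2) := by
        have h1 : (2*(r:ℝ)+1) ≤ (2*(r:ℝ)+1)^2 := by nlinarith [sq_nonneg (2*(r:ℝ)+1)]
        have h2 : Real.sqrt (∑ p ∈ Bsq s r k l, (X p - Xhat p)^2)
            ≤ Real.sqrt (∑ p ∈ Qreg s k l, (X p - Xhat p)^2) := Real.sqrt_le_sqrt hBQ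
        have := Real.sqrt_nonneg (∑ p ∈ Bsq s r k l, (X p - Xhat p)^2)
        nlinarith [Real.sqrt_nonneg (∑ p ∈ Qreg s k l, (X p - Xhat p)^2)]
    _ = Real.sqrt (∑ p ∈ Qreg s k l, (X p - Xhat p)^2) * (2*(r:ℝ)+1)^2 := by ring

lemma maxfun_diff_le (b s : ℕ) (hs : Odd s) (hb : 1 ≤ b) (hbs : 2*b+1 ≤ s)
    (X Xhat : ℤ × ℤ → ℝ) (k l : ℤ) :
    |maxfun b s X k l - maxfun b s Xhat k l| ≤
      Real.sqrt (∑ p ∈ Qreg s k l, (X p - Xhat p)^2) := by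
  have hne : (Finset.Icc 1 b).Nonempty := ⟨1, by simp [hb]⟩
  set S := Real.sqrt (∑ p ∈ Qreg s k l, (X p - Xhat p)^2) with hS
  have key : ∀ Y Z : ℤ × ℤ → ℝ,
      (∀ r ∈ Finset.Icc 1 b, |subAvg s r Y k l - subAvg s r Z k l| ≤ S) →
      maxfun b s Y k l ≤ maxfun b s Z k l + S := by
    intro Y Z h
    simp only [maxfun, dif_pos hne]
    apply Finset.sup'_le
    intro r hr
    have := h r hr
    have h2 : subAvg s r Z k l ≤ (Finset.Icc 1 b).sup' hne (fun r => subAvg s r Z k l) :=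
      Finset.le_sup' (fun r => subAvg s r Z k l) hr
    have := abs_le.mp this
    linarith [this.2]
  have h1 : maxfun b s X k l ≤ maxfun b s Xhat k l + S :=
    key X Xhat fun r hr => subAvg_diff_le s r b hs hr hbs X Xhat k l
  have h2 : maxfun b s Xhat k l ≤ maxfun b s X k l + S := by
    apply key Xhat X
    intro r hr
    rw [abs_sub_comm]
    exact subAvg_diff_le s r b hs hr hbs X Xhat k l
  rw [abs_le]; constructor <;> linarith

lemma Qreg_disjoint (s : ℕ) (hs : 0 < s) {a c : ℤ × ℤ} (h : a ≠ c) :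
    Disjoint (Qreg s a.1 a.2) (Qreg s c.1 c.2) := by
  rw [Finset.disjoint_left]
  rintro ⟨i, j⟩ hp hq
  simp only [Qreg, Finset.mem_product, Finset.mem_Ico] at hp hq
  apply h
  have hsZ : (0:ℤ) < s := by exact_mod_cast hs
  have e1 : a.1 = c.1 := by
    by_contra hne
    rcases lt_or_gt_of_ne hne with hlt | hlt
    · have : a.1 * s + s ≤ c.1 * s := by
        have : (a.1 + 1) * s ≤ c.1 * s := mul_le_mul_of_nonneg_right (by omega) (le_of_lt hsZ)
        linarith [this]
      omega
    · have : c.1 * s + s ≤ a.1 * s := by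
        have : (c.1 + 1) * s ≤ a.1 * s := mul_le_mul_of_nonneg_right (by omega) (le_of_lt hsZ)
        linarith [this]
      omega
  have e2 : a.2 = c.2 := by
    by_contra hne
    rcases lt_or_gt_of_ne hne with hlt | hlt
    · have : a.2 * s + s ≤ c.2 * s := by
        have : (a.2 + 1) * s ≤ c.2 * s := mul_le_mul_of_nonneg_right (by omega) (le_of_lt hsZ)
        linarith [this]
      omega
    · have : c.2 * s + s ≤ a.2 * s := by
        have : (c.2 + 1) * s ≤ a.2 * s := mul_le_mul_of_nonneg_right (by omega) (le_of_lt hsZ)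
        linarith [this]
      omega
  exact Prod.ext e1 e2

theorem maxfun_nonexpansive
    (b s : ℕ) (hs : Odd s) (hb : 1 ≤ b) (hbs : 2 * b + 1 ≤ s)
    (X Xhat : ℤ × ℤ → ℝ) (K : Finset (ℤ × ℤ)) :
    Real.sqrt (∑ kl ∈ K, (maxfun b s X kl.1 kl.2 - maxfun b s Xhat kl.1 kl.2) ^ 2) ≤
      Real.sqrt (∑ p ∈ K.biUnion (fun kl => Qreg s kl.1 kl.2), (X p - Xhat p) ^ 2) := by
  apply Real.sqrt_le_sqrt
  rw [Finset.sum_biUnion]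
  · apply Finset.sum_le_sum
    intro kl _
    have h := maxfun_diff_le b s hs hb hbs X Xhat kl.1 kl.2
    have hnn : (0:ℝ) ≤ ∑ p ∈ Qreg s kl.1 kl.2, (X p - Xhat p)^2 :=
      Finset.sum_nonneg fun p _ => sq_nonneg _
    have := abs_le.mp h
    have hsq := sq_le_sq' (by linarith [this.1]) this.2
    rwa [Real.sq_sqrt hnn] at hsq
  · intro a _ c _ hac
    exact Qreg_disjoint s (by omega) hac
end
end

section
/- Hardy–Littlewood maximal inequality: for any f ∈ L¹(ℝ^d) and any α > 0, the Lebesgue measure of the set {x ∈ ℝ^d : M(f)(x) > α} is at most (3^d / α) ∫_{ℝ^d} |f| dm^d, where M(f)(x) = sup over open balls B centered at x of (1/m^d(B)) ∫_B |f| dm^d. -/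
open MeasureTheory Metric Set Filter
open scoped ENNReal NNReal Topology

noncomputable section

/-- The centered Hardy–Littlewood maximal function: supremum over open balls
centered at `x` of the average of `|f|` over the ball. -/
def hlMaximal {d : ℕ} (f : EuclideanSpace ℝ (Fin d) → ℝ) (x : EuclideanSpace ℝ (Fin d)) :
    ℝ≥0∞ :=
  ⨆ (r : ℝ) (_ : 0 < r), (∫⁻ y in Metric.ball x r, ‖f y‖₊) / volume (Metric.ball x r)

lemma hl_exists_ball {d : ℕ} (f : EuclideanSpace ℝ (Fin d) → ℝ) {α : ℝ}
    {x : EuclideanSpace ℝ (Fin d)} (hx : ENNReal.ofReal α < hlMaximal f x) :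
    ∃ r : ℝ, 0 < r ∧
      ENNReal.ofReal α * volume (Metric.ball x r) < ∫⁻ y in Metric.ball x r, ‖f y‖₊ := by
  rw [hlMaximal, lt_iSup_iff] at hx
  obtain ⟨r, hr⟩ := hx
  rw [lt_iSup_iff] at hr
  obtain ⟨hr0, hr⟩ := hr
  refine ⟨r, hr0, ?_⟩
  have h1 : volume (Metric.ball x r) ≠ 0 := (measure_ball_pos _ _ hr0).ne'
  have h2 : volume (Metric.ball x r) ≠ ∞ := measure_ball_lt_top.ne
  rwa [ENNReal.lt_div_iff_mul_lt (Or.inl h1) (Or.inl h2)] at hr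

lemma hl_key {d : ℕ} (hd : 0 < d) (f : EuclideanSpace ℝ (Fin d) → ℝ) (hf : Integrable f)
    {α : ℝ} (hα : 0 < α) {τ : ℝ} (hτ : 3 < τ) :
    volume {x | ENNReal.ofReal α < hlMaximal f x} ≤
      ENNReal.ofReal (τ ^ d) / ENNReal.ofReal α * ∫⁻ x, ‖f x‖₊ := by
  haveI : Nonempty (Fin d) := ⟨⟨0, hd⟩⟩
  set E := {x | ENNReal.ofReal α < hlMaximal f x} with hE
  set I := ∫⁻ x, ‖f x‖₊ with hIdef
  have hI : I ≠ ∞ := hf.2.ne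
  have hα0 : ENNReal.ofReal α ≠ 0 := (ENNReal.ofReal_pos.2 hα).ne'
  have hαt : ENNReal.ofReal α ≠ ∞ := ENNReal.ofReal_ne_top
  -- choose radii
  have hch : ∀ x ∈ E, ∃ r : ℝ, 0 < r ∧
      ENNReal.ofReal α * volume (Metric.ball x r) < ∫⁻ y in Metric.ball x r, ‖f y‖₊ :=
    fun x hx => hl_exists_ball f hx
  choose! r hr0 hrlt using hch
  -- each chosen ball has integral bounded by I
  have hball_le : ∀ x ∈ E, ENNReal.ofReal α * volume (Metric.ball x (r x)) < I := by
    intro x hx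
    exact (hrlt x hx).trans_le (setLIntegral_le_lintegral _ _)
  have hB1pos : (0 : ℝ≥0∞) < volume (Metric.ball (0 : EuclideanSpace ℝ (Fin d)) 1) :=
    measure_ball_pos _ _ one_pos
  set K := I / (ENNReal.ofReal α * volume (Metric.ball (0 : EuclideanSpace ℝ (Fin d)) 1)) with hK
  have hKlt : K < ∞ := ENNReal.div_lt_top hI (by simp [hα0, hB1pos.ne'])
  set R := max 1 K.toReal with hR
  have hrR : ∀ x ∈ E, r x ≤ R := by
    intro x hx
    have h1 : volume (Metric.ball x (r x))
        = ENNReal.ofReal (r x ^ d) * volume (Metric.ball (0 : EuclideanSpace ℝ (Fin d)) 1) :=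
      by rw [Measure.addHaar_ball volume x (hr0 x hx).le, finrank_euclideanSpace_fin]
    have h2 : ENNReal.ofReal (r x ^ d) * (ENNReal.ofReal α *
        volume (Metric.ball (0 : EuclideanSpace ℝ (Fin d)) 1)) < I := by
      calc ENNReal.ofReal (r x ^ d) * (ENNReal.ofReal α * volume (Metric.ball (0 : EuclideanSpace ℝ (Fin d)) 1))
          = ENNReal.ofReal α * volume (Metric.ball x (r x)) := by rw [h1]; ring
        _ < I := hball_le x hx
    have h3 : ENNReal.ofReal (r x ^ d) ≤ K := by
      rw [hK, ENNReal.le_div_iff_mul_le (Or.inl (by simp [hα0, hB1pos.ne'])) (Or.inl (by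
        exact ENNReal.mul_ne_top hαt measure_ball_lt_top.ne))]
      exact h2.le
    have h4 : r x ^ d ≤ K.toReal := by
      rw [← ENNReal.ofReal_le_iff_le_toReal hKlt.ne] at *
      exact h3
    rcases le_or_gt (r x) 1 with h | h
    · exact h.trans (le_max_left _ _)
    · have : r x ≤ r x ^ d := le_self_pow₀ h.le hd.ne'
      exact (this.trans h4).trans (le_max_right _ _)
  -- Vitali
  obtain ⟨u, huE, hdisj, hcov⟩ :=
    Vitali.exists_disjoint_subfamily_covering_enlargement_closedBall E id r R hrR τ hτ
  have hu_cnt : u.Countable := by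
    apply hdisj.countable_of_nonempty_interior
    intro b hb
    exact ⟨b, ball_subset_interior_closedBall (mem_ball_self (hr0 b (huE hb)))⟩
  haveI := hu_cnt.to_subtype
  have hcover : E ⊆ ⋃ b ∈ u, closedBall b (τ * r b) := by
    intro a ha
    obtain ⟨b, hb, hsub⟩ := hcov a ha
    exact mem_biUnion hb (hsub (mem_closedBall_self (hr0 a ha).le))
  calc volume E ≤ volume (⋃ b ∈ u, closedBall b (τ * r b)) := measure_mono hcover
    _ ≤ ∑' b : u, volume (closedBall (b : EuclideanSpace ℝ (Fin d)) (τ * r b)) :=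
        measure_biUnion_le _ hu_cnt _
    _ ≤ ∑' b : u, ENNReal.ofReal (τ ^ d) *
          ((∫⁻ y in Metric.ball (b : EuclideanSpace ℝ (Fin d)) (r b), ‖f y‖₊) / ENNReal.ofReal α) := by
        apply ENNReal.tsum_le_tsum
        intro b
        have hbE : (b : EuclideanSpace ℝ (Fin d)) ∈ E := huE b.2
        have hrb : 0 < r b := hr0 b hbE
        have hτ0 : (0:ℝ) < τ := by linarith
        have e1 : volume (closedBall (b : EuclideanSpace ℝ (Fin d)) (τ * r b))
            = ENNReal.ofReal (τ ^ d) * volume (Metric.ball (b : EuclideanSpace ℝ (Fin d)) (r b)) := by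
          rw [Measure.addHaar_closedBall volume _ (by positivity : (0:ℝ) ≤ τ * r b),
            Measure.addHaar_ball volume _ hrb.le, finrank_euclideanSpace_fin, mul_pow,
            ENNReal.ofReal_mul (by positivity), mul_assoc]
        rw [e1]
        gcongr
        rw [ENNReal.le_div_iff_mul_le (Or.inl hα0) (Or.inl hαt), mul_comm]
        exact (hrlt b hbE).le
    _ = ENNReal.ofReal (τ ^ d) *
          ((∑' b : u, ∫⁻ y in Metric.ball (b : EuclideanSpace ℝ (Fin d)) (r b), ‖f y‖₊)
            / ENNReal.ofReal α) := by
        simp only [div_eq_mul_inv, ENNReal.tsum_mul_left, ENNReal.tsum_mul_right]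
    _ ≤ ENNReal.ofReal (τ ^ d) * (I / ENNReal.ofReal α) := by
        gcongr
        have hball_disj : Pairwise (Function.onFun Disjoint
            fun b : u => Metric.ball (b : EuclideanSpace ℝ (Fin d)) (r b)) := by
          intro b c hbc
          exact Disjoint.mono ball_subset_closedBall ball_subset_closedBall
            (hdisj b.2 c.2 (fun h => hbc (Subtype.ext h)))
        rw [← lintegral_iUnion (fun b => measurableSet_ball) hball_disj]
        exact setLIntegral_le_lintegral _ _
    _ = ENNReal.ofReal (τ ^ d) / ENNReal.ofReal α * I := by
        rw [div_eq_mul_inv, div_eq_mul_inv]; ring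

theorem hardy_littlewood_maximal_inequality {d : ℕ}
    (f : EuclideanSpace ℝ (Fin d) → ℝ) (hf : Integrable f)
    (α : ℝ) (hα : 0 < α) :
    volume {x | ENNReal.ofReal α < hlMaximal f x} ≤
      (3 ^ d / ENNReal.ofReal α) * ∫⁻ x, ‖f x‖₊ := by
  have hα0 : ENNReal.ofReal α ≠ 0 := (ENNReal.ofReal_pos.2 hα).ne'
  have hαt : ENNReal.ofReal α ≠ ∞ := ENNReal.ofReal_ne_top
  rcases Nat.eq_zero_or_pos d with hd | hd
  · -- dimension 0
    subst hd
    haveI : Subsingleton (EuclideanSpace ℝ (Fin 0)) :=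
      ⟨fun a b => PiLp.ext fun i => Fin.elim0 i⟩
    rcases Set.eq_empty_or_nonempty {x | ENNReal.ofReal α < hlMaximal f x} with h | ⟨x, hx⟩
    · simp [h]
    · obtain ⟨r, hr0, hr⟩ := hl_exists_ball f hx
      have hball : Metric.ball x r = Set.univ :=
        Set.eq_univ_of_forall fun y => by
          simp [Metric.mem_ball, Subsingleton.elim y x, hr0]
      calc volume {x | ENNReal.ofReal α < hlMaximal f x}
          ≤ volume (Metric.ball x r) := by rw [hball]; exact measure_mono (subset_univ _)
        _ ≤ (∫⁻ y in Metric.ball x r, ‖f y‖₊) / ENNReal.ofReal α := by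
            rw [ENNReal.le_div_iff_mul_le (Or.inl hα0) (Or.inl hαt), mul_comm]
            exact hr.le
        _ ≤ (∫⁻ x, ‖f x‖₊) / ENNReal.ofReal α := by
            gcongr
            exact Measure.restrict_le_self
        _ = (3 ^ 0 / ENNReal.ofReal α) * ∫⁻ x, ‖f x‖₊ := by
            rw [pow_zero, div_eq_mul_inv, div_eq_mul_inv, one_mul, mul_comm]
  · -- dimension ≥ 1 : limit τ → 3
    have hc : (ENNReal.ofReal α)⁻¹ * (∫⁻ x, ‖f x‖₊) ≠ ∞ :=
      ENNReal.mul_ne_top (by simp [hα0]) hf.2.ne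
    have h1 : Tendsto (fun n : ℕ => (3 + 1/((n:ℝ)+1))) atTop (𝓝 3) := by
      simpa using (tendsto_const_nhds : Tendsto (fun _ : ℕ => (3:ℝ)) atTop (𝓝 3)).add tendsto_one_div_add_atTop_nhds_zero_nat
    have h2 : Tendsto (fun n : ℕ => ENNReal.ofReal ((3 + 1/((n:ℝ)+1)) ^ d)) atTop
        (𝓝 (ENNReal.ofReal (3 ^ d))) :=
      (ENNReal.continuous_ofReal.tendsto _).comp ((continuous_pow d).continuousAt.tendsto.comp h1)
    have h3 : Tendsto (fun n : ℕ => ENNReal.ofReal ((3 + 1/((n:ℝ)+1)) ^ d) *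
        ((ENNReal.ofReal α)⁻¹ * (∫⁻ x, ‖f x‖₊))) atTop
        (𝓝 (ENNReal.ofReal (3 ^ d) * ((ENNReal.ofReal α)⁻¹ * (∫⁻ x, ‖f x‖₊)))) :=
      ENNReal.Tendsto.mul_const h2 (Or.inr hc)
    have key : ∀ n : ℕ, volume {x | ENNReal.ofReal α < hlMaximal f x} ≤
        ENNReal.ofReal ((3 + 1/((n:ℝ)+1)) ^ d) * ((ENNReal.ofReal α)⁻¹ * (∫⁻ x, ‖f x‖₊)) := by
      intro n
      have hτ : (3:ℝ) < 3 + 1/((n:ℝ)+1) := by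
        have : (0:ℝ) < 1/((n:ℝ)+1) := by positivity
        linarith
      have := hl_key hd f hf hα hτ
      rwa [div_eq_mul_inv, mul_assoc] at this
    have := ge_of_tendsto' h3 key
    rwa [show ENNReal.ofReal ((3:ℝ) ^ d) = 3 ^ d by
        rw [ENNReal.ofReal_pow (by norm_num)]; norm_num,
      ← mul_assoc, ← div_eq_mul_inv] at this
end
end
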